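/- Let T : Z/2^M → Z/2^M be any permutation with a single cycle, and for each z ∈ Z/2^M let H_z : Z_2 → Z_2 satisfy: (1) δ_i(H_z(x)) ≡ δ_i(x) + ρ_i(z; x) (mod 2) where ρ_i depends only on δ_0(x),...,δ_{i-1}(x) (and on the bits of z), with ρ_0 independent of x; (2) ∑_{z=0}^{2^M−1} ρ_0(z) ≡ 1 (mod 2); (3) ∑_{z=0}^{2^M−1} ∑_{x=0}^{2^i−1} ρ_i(z; x) ≡ 1 (mod 2) for all i ≥ 1. Then the mapping W(x) = T(x mod 2^M) + 2^M · H_{x mod 2^M}(⌊x/2^M⌋) is transitive modulo 2^k for all k ≥ M, i.e., induces a single-cycle permutation of Z/2^k. -/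

import Mathlib

open scoped BigOperators

/-- The `j`-th binary digit of a 2-adic integer, as an element of `ZMod 2`. -/
noncomputable def bit2 (j : ℕ) (x : ℤ_[2]) : ZMod 2 := ((x.appr (j+1) / 2^j : ℕ) : ZMod 2)

/-- Compatibility = 1-Lipschitz w.r.t. the 2-adic metric. -/
def Compatible (f : ℤ_[2] → ℤ_[2]) : Prop := ∀ x y : ℤ_[2], ‖f x - f y‖ ≤ ‖x - y‖

/-- Reduction of a 2-adic integer modulo `2^n`. -/
noncomputable def padMod (n : ℕ) (x : ℤ_[2]) : ZMod (2^n) := (x.appr n : ZMod (2^n))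

/-- The map induced by `f : ℤ₂ → ℤ₂` on `ZMod (2^n)` (via canonical lifts). -/
noncomputable def inducedMap (n : ℕ) (f : ℤ_[2] → ℤ_[2]) : ZMod (2^n) → ZMod (2^n) :=
  fun a => padMod n (f ((a.val : ℕ) : ℤ_[2]))

/-- A self-map of a set is a single cycle (transitive on points). -/
def IsSingleCycle {α : Type*} (g : α → α) : Prop := ∀ a b : α, ∃ k : ℕ, g^[k] a = b

/-- Measure preservation: `f` induces a bijection modulo `2^n` for every `n`. -/
def MeasurePreservingZ (f : ℤ_[2] → ℤ_[2]) : Prop := ∀ n : ℕ, Function.Bijective (inducedMap n f)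

/-- Ergodicity: `f` induces a single-cycle permutation modulo `2^n` for every `n`. -/
def ErgodicZ (f : ℤ_[2] → ℤ_[2]) : Prop := ∀ n : ℕ, IsSingleCycle (inducedMap n f)

/-- Induced map modulo `2^n` of an `m`-variate map on `(ℤ₂)^m`. -/
noncomputable def inducedMapM (m n : ℕ) (G : (Fin m → ℤ_[2]) → Fin m → ℤ_[2]) :
    (Fin m → ZMod (2^n)) → Fin m → ZMod (2^n) :=
  fun a j => padMod n (G (fun i => (((a i).val : ℕ) : ℤ_[2])) j)

/-- Coordinatewise compatibility of an `m`-variate map. -/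
def CompatibleM (m : ℕ) (G : (Fin m → ℤ_[2]) → Fin m → ℤ_[2]) : Prop :=
  ∀ (n : ℕ) (x y : Fin m → ℤ_[2]), (∀ i, padMod n (x i) = padMod n (y i)) →
    ∀ j, padMod n (G x j) = padMod n (G y j)

/-- Ergodicity of an `m`-variate map: single cycle modulo `2^n` for all `n`. -/
def ErgodicM (m : ℕ) (G : (Fin m → ℤ_[2]) → Fin m → ℤ_[2]) : Prop :=
  ∀ n : ℕ, IsSingleCycle (inducedMapM m n G)

/-- The 2-adic integer with prescribed binary digits. -/
noncomputable def ofBits (b : ℕ → ZMod 2) : ℤ_[2] := ∑' i : ℕ, ((b i).val : ℤ_[2]) * 2^i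

/-- Bitwise XOR of 2-adic integers. -/
noncomputable def xor2 (x y : ℤ_[2]) : ℤ_[2] := ofBits (fun i => bit2 i x + bit2 i y)

/-- Bitwise AND of 2-adic integers. -/
noncomputable def and2 (x y : ℤ_[2]) : ℤ_[2] := ofBits (fun i => bit2 i x * bit2 i y)

/-- Bitwise AND of a list, the empty AND being `-1` (the all-ones string). -/
noncomputable def andL (l : List ℤ_[2]) : ℤ_[2] := l.foldr and2 (-1)


lemma appr_unique (x : ℤ_[2]) (n b : ℕ) (hb : b < 2^n)
    (h : x - (b : ℤ_[2]) ∈ Ideal.span {(2:ℤ_[2])^n}) : x.appr n = b := by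
  have h1 := PadicInt.appr_spec n x
  have h2 : ((((x.appr n : ℤ) - (b:ℤ)) : ℤ) : ℤ_[2]) ∈ Ideal.span {((2:ℕ):ℤ_[2])^n} := by
    have := Ideal.sub_mem _ h h1
    have e : x - (b:ℤ_[2]) - (x - (x.appr n : ℤ_[2])) = (((x.appr n : ℤ) - (b:ℤ) : ℤ) : ℤ_[2]) := by
      push_cast; ring
    rw [e] at this
    exact_mod_cast this
  rw [← PadicInt.norm_le_pow_iff_mem_span_pow] at h2
  rw [PadicInt.norm_int_le_pow_iff_dvd] at h2
  have ha := x.appr_lt (p := 2) n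
  have h4 : ((x.appr n : ℤ) - b) = 0 := by
    refine Int.eq_zero_of_abs_lt_dvd h2 ?_
    have hb' : (b:ℤ) < 2^n := by exact_mod_cast hb
    have ha' : ((x.appr n : ℕ):ℤ) < 2^n := by exact_mod_cast ha
    have h5 : ((2:ℕ)^n : ℤ) = (2:ℤ)^n := by push_cast; ring
    rw [h5, abs_lt]
    omega
  omega

lemma appr_zero' (x : ℤ_[2]) : x.appr 0 = 0 := rfl

lemma appr_natCast (a n : ℕ) : ((a:ℕ):ℤ_[2]).appr n = a % 2^n := by
  apply appr_unique _ _ _ (Nat.mod_lt _ (Nat.pow_pos (n := n) (by norm_num)))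
  rw [Ideal.mem_span_singleton]
  refine ⟨((a / 2^n : ℕ) : ℤ_[2]), ?_⟩
  have : a = 2^n * (a / 2^n) + a % 2^n := (Nat.div_add_mod a (2^n)).symm.trans rfl
  calc ((a:ℕ):ℤ_[2]) - ((a % 2^n : ℕ):ℤ_[2])
      = ((2^n * (a / 2^n) + a % 2^n : ℕ) : ℤ_[2]) - ((a % 2^n : ℕ):ℤ_[2]) := by rw [← this]
    _ = 2^n * ((a / 2^n : ℕ) : ℤ_[2]) := by push_cast; ring

lemma appr_mod (x : ℤ_[2]) {m n : ℕ} (h : m ≤ n) : x.appr n % 2^m = x.appr m := by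
  obtain ⟨c, hc⟩ := PadicInt.dvd_appr_sub_appr x m n h
  have h1 : x.appr m ≤ x.appr n := x.appr_mono h
  have h2 : x.appr n = x.appr m + 2^m * c := by omega
  have h3 := x.appr_lt (p := 2) m
  rw [h2, Nat.add_mul_mod_self_left, Nat.mod_eq_of_lt h3]

lemma bit2_val (x : ℤ_[2]) (j : ℕ) : (bit2 j x).val = x.appr (j+1) / 2^j := by
  have h1 := x.appr_lt (p := 2) (j+1)
  have h2 : x.appr (j+1) / 2^j < 2 := by
    apply Nat.div_lt_of_lt_mul
    exact lt_of_lt_of_eq h1 (pow_succ 2 j)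
  rw [bit2, ZMod.val_natCast, Nat.mod_eq_of_lt h2]

lemma appr_succ (x : ℤ_[2]) (j : ℕ) :
    x.appr (j+1) = x.appr j + 2^j * (bit2 j x).val := by
  rw [bit2_val]
  have := Nat.div_add_mod (x.appr (j+1)) (2^j)
  have h2 : x.appr (j+1) % 2^j = x.appr j := appr_mod x (Nat.le_succ j)
  omega

lemma appr_eq_of_bits (x y : ℤ_[2]) (n : ℕ) (h : ∀ i, i < n → bit2 i x = bit2 i y) :
    x.appr n = y.appr n := by
  induction n with
  | zero => rfl
  | succ m ih =>
    rw [appr_succ, appr_succ, ih (fun i hi => h i (Nat.lt_succ_of_lt hi)),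
      h m (Nat.lt_succ_self m)]

lemma bit2_natCast (a i : ℕ) : bit2 i ((a:ℕ):ℤ_[2]) = ((a / 2^i : ℕ) : ZMod 2) := by
  rw [bit2, appr_natCast]
  have h1 : a % 2 ^ (i+1) / 2 ^ i = a / 2^i % 2 := by
    rw [pow_succ, Nat.mod_mul_right_div_self]
  rw [h1, ZMod.natCast_mod]

lemma padMod_natCast (a n : ℕ) : padMod n ((a:ℕ):ℤ_[2]) = ((a:ℕ) : ZMod (2^n)) := by
  rw [padMod, appr_natCast, ZMod.natCast_mod]

lemma appr_shift (M n z : ℕ) (hM : M ≤ n) (hz : z < 2^M) (u : ℤ_[2]) :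
    ((z:ℤ_[2]) + 2^M * u).appr n = z + 2^M * u.appr (n-M) := by
  apply appr_unique
  · have h1 := u.appr_lt (p := 2) (n-M)
    have h2 : 2^M * 2^(n-M) = 2^n := by rw [← pow_add]; congr 1; omega
    have h3 : 2^M * u.appr (n-M) + 2^M = 2^M * (u.appr (n-M) + 1) := by ring
    have h4 : 2^M * (u.appr (n-M) + 1) ≤ 2^M * 2^(n-M) :=
      Nat.mul_le_mul_left _ (by omega)
    omega
  · rw [Ideal.mem_span_singleton]
    obtain ⟨c, hc⟩ := Ideal.mem_span_singleton.1 (PadicInt.appr_spec (n-M) u)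
    refine ⟨c, ?_⟩
    have h2 : (2:ℤ_[2])^M * 2^(n-M) = 2^n := by rw [← pow_add]; congr 1; omega
    have hc' : u - ((u.appr (n-M) : ℕ) : ℤ_[2]) = 2^(n-M) * c := by exact_mod_cast hc
    calc (z:ℤ_[2]) + 2^M * u - ((z + 2^M * u.appr (n-M) : ℕ) : ℤ_[2])
        = 2^M * (u - ((u.appr (n-M) : ℕ) : ℤ_[2])) := by push_cast; ring
      _ = 2^M * (2^(n-M) * c) := by rw [hc']
      _ = 2^n * c := by rw [← mul_assoc, h2]

lemma nat_div_shift (z a M t : ℕ) (hz : z < 2^M) : (z + 2^M * a) / 2^(M+t) = a / 2^t := by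
  rw [pow_add, ← Nat.div_div_eq_div_mul, Nat.add_mul_div_left _ _ (Nat.pow_pos (n := M) (by norm_num)),
    Nat.div_eq_of_lt hz, Nat.zero_add]

lemma bit2_shift_high (M t z : ℕ) (hz : z < 2^M) (u : ℤ_[2]) :
    bit2 (M+t) ((z:ℤ_[2]) + 2^M * u) = bit2 t u := by
  rw [bit2, bit2, show M + t + 1 = M + (t+1) by omega, appr_shift M (M+(t+1)) z (by omega) hz,
    show M + (t+1) - M = t + 1 by omega, nat_div_shift z _ M t hz]

lemma bit2_shift_low (M i z : ℕ) (hi : i < M) (hz : z < 2^M) (u : ℤ_[2]) :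
    bit2 i ((z:ℤ_[2]) + 2^M * u) = ((z / 2^i : ℕ) : ZMod 2) := by
  have h1 : ((z:ℤ_[2]) + 2^M * u).appr (i+1) = z % 2^(i+1) := by
    have h2 : ((z:ℤ_[2]) + 2^M * u).appr M = z := by
      rw [appr_shift M M z le_rfl hz]; simp [appr_zero']
    rw [← appr_mod _ (show i+1 ≤ M by omega), h2]
  have h3 : z % 2 ^ (i+1) / 2 ^ i = z / 2^i % 2 := by
    rw [pow_succ, Nat.mod_mul_right_div_self]
  rw [bit2, h1, h3, ZMod.natCast_mod]

lemma nat_bit_congr {v w m j : ℕ} (h : v % 2^m = w % 2^m) (hj : j < m) :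
    ((v / 2^j : ℕ) : ZMod 2) = ((w / 2^j : ℕ) : ZMod 2) := by
  have key : ∀ u : ℕ, u / 2^j % 2 = u % 2^m % (2^j * 2) / 2^j := by
    intro u
    rw [Nat.mod_mod_of_dvd _ (by rw [← pow_succ]; exact pow_dvd_pow 2 (by omega)),
      Nat.mod_mul_right_div_self]
  rw [← ZMod.natCast_mod (v / 2^j) 2, ← ZMod.natCast_mod (w / 2^j) 2, key v, key w, h]

section Wsec
variable {M : ℕ} {T : ZMod (2^M) → ZMod (2^M)} {H : ZMod (2^M) → ℤ_[2] → ℤ_[2]}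
  {ρ : ℕ → ZMod (2^M) → ℤ_[2] → ZMod 2} {W : ℤ_[2] → ℤ_[2]}

lemma neZero_pow2 (M : ℕ) : NeZero (2^M) := ⟨Nat.pos_iff_ne_zero.1 (Nat.pow_pos (n := M) (by norm_num))⟩

variable
  (h1 : ∀ (i : ℕ) (z : ZMod (2^M)) (x : ℤ_[2]), bit2 i (H z x) = bit2 i x + ρ i z x)
  (h1' : ∀ (i : ℕ) (z : ZMod (2^M)) (x y : ℤ_[2]),
      (∀ s : ℕ, s < i → bit2 s x = bit2 s y) → ρ i z x = ρ i z y)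
  (hW : ∀ (z : ZMod (2^M)) (y : ℤ_[2]),
      W ((z.val : ℤ_[2]) + 2^M * y) = ((T z).val : ℤ_[2]) + 2^M * H z y)

include hW in
lemma W_eq (v : ℕ) : W ((v:ℕ):ℤ_[2]) =
    (((T ((v:ℕ) : ZMod (2^M))).val : ℕ) : ℤ_[2])
      + 2^M * H ((v:ℕ) : ZMod (2^M)) ((v / 2^M : ℕ) : ℤ_[2]) := by
  haveI := neZero_pow2 M
  have h := hW ((v:ℕ) : ZMod (2^M)) ((v / 2^M : ℕ) : ℤ_[2])
  rw [ZMod.val_natCast] at h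
  have e : ((v % 2^M : ℕ) : ℤ_[2]) + 2^M * ((v / 2^M : ℕ) : ℤ_[2]) = ((v:ℕ):ℤ_[2]) := by
    have := Nat.mod_add_div v (2^M)
    calc ((v % 2^M : ℕ) : ℤ_[2]) + 2^M * ((v / 2^M : ℕ) : ℤ_[2])
        = ((v % 2^M + 2^M * (v / 2^M) : ℕ) : ℤ_[2]) := by push_cast; ring
      _ = ((v:ℕ):ℤ_[2]) := by rw [this]
  rw [e] at h
  exact h

include hW in
lemma W_bit_low (v i : ℕ) (hi : i < M) :
    bit2 i (W ((v:ℕ):ℤ_[2])) = (((T ((v:ℕ) : ZMod (2^M))).val / 2^i : ℕ) : ZMod 2) := by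
  haveI := neZero_pow2 M
  rw [W_eq hW v, bit2_shift_low M i _ hi (ZMod.val_lt _)]

include h1 hW in
lemma W_bit_high (v t : ℕ) :
    bit2 (M+t) (W ((v:ℕ):ℤ_[2])) = ((v / 2^(M+t) : ℕ) : ZMod 2)
      + ρ t ((v:ℕ):ZMod (2^M)) ((v / 2^M : ℕ):ℤ_[2]) := by
  haveI := neZero_pow2 M
  rw [W_eq hW v, bit2_shift_high M t _ (ZMod.val_lt _), h1, bit2_natCast]
  rw [show v / 2^M / 2^t = v / 2^(M+t) from by rw [Nat.div_div_eq_div_mul, ← pow_add]]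

lemma zmod_cast_congr {v w m : ℕ} (M : ℕ) (hM : M ≤ m) (h : v % 2^m = w % 2^m) :
    ((v:ℕ) : ZMod (2^M)) = ((w:ℕ) : ZMod (2^M)) := by
  rw [ZMod.natCast_eq_natCast_iff]
  have : v % 2^M = w % 2^M := by
    rw [← Nat.mod_mod_of_dvd v (pow_dvd_pow 2 hM), ← Nat.mod_mod_of_dvd w (pow_dvd_pow 2 hM), h]
  exact this

include h1 h1' hW in
lemma W_bits_congr (m : ℕ) (hm : M ≤ m) (v w : ℕ) (hvw : v % 2^m = w % 2^m) :
    ∀ i, i < m → bit2 i (W ((v:ℕ):ℤ_[2])) = bit2 i (W ((w:ℕ):ℤ_[2])) := by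
  intro i hi
  have hz := zmod_cast_congr M hm hvw
  rcases lt_or_ge i M with hiM | hiM
  · rw [W_bit_low hW v i hiM, W_bit_low hW w i hiM, hz]
  · obtain ⟨t, rfl⟩ : ∃ t, i = M + t := ⟨i - M, by omega⟩
    rw [W_bit_high h1 hW v t, W_bit_high h1 hW w t, hz,
      nat_bit_congr hvw hi]
    congr 1
    apply h1'
    intro s hs
    rw [bit2_natCast, bit2_natCast]
    have e : ∀ u : ℕ, u / 2^M / 2^s = u / 2^(M+s) := by
      intro u; rw [Nat.div_div_eq_div_mul, ← pow_add]
    rw [e, e]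
    exact nat_bit_congr hvw (by omega)

lemma nat_add_pow_div {j k : ℕ} (hj : j ≤ k) (v : ℕ) : (v + 2^k)/2^j = v/2^j + 2^(k-j) := by
  have e : 2^k = 2^(k-j) * 2^j := by rw [← pow_add]; congr 1; omega
  rw [e, Nat.add_mul_div_right _ _ (Nat.pow_pos (n := j) (by norm_num))]

lemma bitcast_add_pow_lt {j k : ℕ} (hj : j < k) (v : ℕ) :
    (((v + 2^k)/2^j : ℕ) : ZMod 2) = ((v/2^j : ℕ) : ZMod 2) := by
  rw [nat_add_pow_div (le_of_lt hj)]
  push_cast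
  rw [show ((2:ZMod 2) = 0) from rfl, zero_pow (show k - j ≠ 0 by omega), add_zero]

lemma bitcast_add_pow_eq {k : ℕ} (v : ℕ) :
    (((v + 2^k)/2^k : ℕ) : ZMod 2) = ((v/2^k : ℕ) : ZMod 2) + 1 := by
  rw [nat_add_pow_div le_rfl, Nat.sub_self, pow_zero]
  push_cast
  ring

include h1 h1' hW in
lemma W_bit_flip_top (k : ℕ) (hk : M ≤ k) (v : ℕ) :
    bit2 k (W ((v + 2^k : ℕ):ℤ_[2])) = bit2 k (W ((v:ℕ):ℤ_[2])) + 1 := by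
  obtain ⟨t, rfl⟩ : ∃ t, k = M + t := ⟨k - M, by omega⟩
  rw [W_bit_high h1 hW _ t, W_bit_high h1 hW v t, bitcast_add_pow_eq v]
  have hz : ((v + 2^(M+t) : ℕ) : ZMod (2^M)) = ((v:ℕ) : ZMod (2^M)) := by
    apply zmod_cast_congr M le_rfl
    obtain ⟨c, hc⟩ : (2^M : ℕ) ∣ 2^(M+t) := pow_dvd_pow 2 (Nat.le_add_right M t)
    rw [hc, Nat.add_mul_mod_self_left]
  have hρ : ρ t ((v + 2^(M+t) : ℕ) : ZMod (2^M)) (((v + 2^(M+t))/2^M : ℕ) : ℤ_[2])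
      = ρ t ((v:ℕ) : ZMod (2^M)) ((v/2^M : ℕ) : ℤ_[2]) := by
    rw [hz]
    apply h1'
    intro s hs
    rw [bit2_natCast, bit2_natCast]
    have e : ∀ u : ℕ, u / 2^M / 2^s = u / 2^(M+s) := by
      intro u; rw [Nat.div_div_eq_div_mul, ← pow_add]
    rw [e, e]
    exact bitcast_add_pow_lt (by omega) v
  rw [hρ]
  ring

include h1 h1' hW in
lemma padW_congr (m : ℕ) (hm : M ≤ m) (v w : ℕ) (hvw : v % 2^m = w % 2^m) :
    padMod m (W ((v:ℕ):ℤ_[2])) = padMod m (W ((w:ℕ):ℤ_[2])) := by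
  unfold padMod
  rw [appr_eq_of_bits _ _ m (W_bits_congr h1 h1' hW m hm v w hvw)]

include h1 h1' hW in
lemma padW_flip (k : ℕ) (hk : M ≤ k) (v : ℕ) :
    padMod (k+1) (W ((v + 2^k : ℕ):ℤ_[2]))
      = padMod (k+1) (W ((v:ℕ):ℤ_[2])) + ((2^k : ℕ) : ZMod (2^(k+1))) := by
  have hlow : (W ((v + 2^k : ℕ):ℤ_[2])).appr k = (W ((v:ℕ):ℤ_[2])).appr k := by
    apply appr_eq_of_bits
    intro i hi
    exact W_bits_congr h1 h1' hW k hk _ v (Nat.add_mod_right v (2^k)) i hi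
  have htop := W_bit_flip_top h1 h1' hW k hk v
  rw [padMod, padMod, appr_succ, appr_succ, hlow, htop]
  set b := bit2 k (W ((v:ℕ):ℤ_[2])) with hb
  have hcases : b = 0 ∨ b = 1 := by
    have : ∀ c : ZMod 2, c = 0 ∨ c = 1 := by decide
    exact this b
  rcases hcases with h | h
  · rw [h, show ((0:ZMod 2)+1).val = 1 from by decide, show (0:ZMod 2).val = 0 from by decide]
    push_cast
    ring
  · rw [h, show ((1:ZMod 2)+1).val = 0 from by decide, show (1:ZMod 2).val = 1 from by decide]
    have hzero : ((2^(k+1) : ℕ) : ZMod (2^(k+1))) = 0 := ZMod.natCast_self _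
    push_cast at hzero ⊢
    linear_combination -hzero

include h1 hW in
lemma sum_beta (n : ℕ) (hn : M ≤ n)
    (h2 : ∑ z : Fin (2^M), ρ 0 (((z : ℕ) : ZMod (2^M))) 0 = 1)
    (h3 : ∀ i : ℕ, 1 ≤ i → ∑ z : Fin (2^M), ∑ x : Fin (2^i),
        ρ i (((z : ℕ) : ZMod (2^M))) (((x : ℕ) : ℤ_[2])) = 1) :
    ∑ a : ZMod (2^n), bit2 n (W ((a.val : ℕ) : ℤ_[2])) = 1 := by
  haveI := neZero_pow2 M
  haveI := neZero_pow2 n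
  have hβ : ∀ a : ZMod (2^n), bit2 n (W ((a.val:ℕ):ℤ_[2]))
      = ρ (n-M) ((a.val : ℕ) : ZMod (2^M)) ((a.val / 2^M : ℕ) : ℤ_[2]) := by
    intro a
    have h := W_bit_high h1 hW a.val (n-M)
    rw [show M + (n-M) = n by omega] at h
    rw [h, Nat.div_eq_of_lt (ZMod.val_lt a), Nat.cast_zero, zero_add]
  rw [Finset.sum_congr rfl (fun a _ => hβ a)]
  rcases Nat.eq_or_lt_of_le hn with he | hlt
  · subst he
    rw [Nat.sub_self]
    have he : Function.Bijective (fun z : Fin (2^M) => ((z:ℕ) : ZMod (2^M))) := by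
      rw [Fintype.bijective_iff_injective_and_card]
      constructor
      · intro z z' hzz
        have : (z:ℕ) % 2^M = (z':ℕ) % 2^M := by
          have := congrArg ZMod.val hzz
          rwa [ZMod.val_natCast, ZMod.val_natCast] at this
        rw [Nat.mod_eq_of_lt z.isLt, Nat.mod_eq_of_lt z'.isLt] at this
        exact Fin.ext this
      · rw [ZMod.card, Fintype.card_fin]
    rw [← Fintype.sum_bijective _ he
      (fun z : Fin (2^M) => ρ 0 (((z:ℕ) : ZMod (2^M))) 0) _ ?_]
    · exact h2
    · intro z
      rw [ZMod.val_natCast, Nat.mod_eq_of_lt z.isLt,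
        Nat.div_eq_of_lt z.isLt, Nat.cast_zero]
  · -- M < n
    have hpos : 0 < 2^M := Nat.pow_pos (n := M) (by norm_num)
    have hlt' : ∀ zy : Fin (2^M) × Fin (2^(n-M)), (zy.1:ℕ) + 2^M * (zy.2:ℕ) < 2^n := by
      rintro ⟨z, y⟩
      show (z:ℕ) + 2^M * (y:ℕ) < 2^n
      have h1' := z.isLt
      have h2' := y.isLt
      have e2 : 2^M * 2^(n-M) = 2^n := by rw [← pow_add]; congr 1; omega
      have h3' : 2^M * ((y:ℕ) + 1) ≤ 2^M * 2^(n-M) := Nat.mul_le_mul_left _ (by omega)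
      have h4' : 2^M * ((y:ℕ) + 1) = 2^M * (y:ℕ) + 2^M := by ring
      omega
    have he : Function.Bijective
        (fun zy : Fin (2^M) × Fin (2^(n-M)) => (((zy.1:ℕ) + 2^M * (zy.2:ℕ) : ℕ) : ZMod (2^n))) := by
      rw [Fintype.bijective_iff_injective_and_card]
      constructor
      · rintro ⟨z, y⟩ ⟨z', y'⟩ hzz
        simp only at hzz
        have hv : ((z:ℕ) + 2^M * (y:ℕ)) = ((z':ℕ) + 2^M * (y':ℕ)) := by
          have := congrArg ZMod.val hzz
          rwa [ZMod.val_natCast, ZMod.val_natCast,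
            Nat.mod_eq_of_lt (hlt' (z,y)), Nat.mod_eq_of_lt (hlt' (z',y'))] at this
        have hz : (z:ℕ) = (z':ℕ) := by
          have e1 : ((z:ℕ) + 2^M * (y:ℕ)) % 2^M = (z:ℕ) := by
            rw [Nat.add_mul_mod_self_left, Nat.mod_eq_of_lt z.isLt]
          have e2 : ((z':ℕ) + 2^M * (y':ℕ)) % 2^M = (z':ℕ) := by
            rw [Nat.add_mul_mod_self_left, Nat.mod_eq_of_lt z'.isLt]
          rw [← e1, ← e2, hv]
        have hy : (y:ℕ) = (y':ℕ) := by
          have : 2^M * (y:ℕ) = 2^M * (y':ℕ) := by omega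
          exact Nat.eq_of_mul_eq_mul_left hpos this
        exact Prod.ext (Fin.ext hz) (Fin.ext hy)
      · rw [ZMod.card, Fintype.card_prod, Fintype.card_fin, Fintype.card_fin,
          ← pow_add, show M + (n - M) = n by omega]
    rw [← Fintype.sum_bijective _ he
      (fun zy : Fin (2^M) × Fin (2^(n-M)) =>
        ρ (n-M) (((zy.1:ℕ) : ZMod (2^M))) (((zy.2:ℕ) : ℤ_[2]))) _ ?_]
    · rw [Fintype.sum_prod_type]
      exact h3 (n-M) (by omega)
    · rintro ⟨z, y⟩
      simp only
      have e1 : (((z:ℕ) + 2^M * (y:ℕ) : ℕ) : ZMod (2^M)) = ((z:ℕ) : ZMod (2^M)) := by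
        have hz0 : ((2^M :ℕ) : ZMod (2^M)) = 0 := ZMod.natCast_self _
        push_cast at hz0 ⊢
        rw [hz0, zero_mul, add_zero]
      have e2 : ((z:ℕ) + 2^M * (y:ℕ)) / 2^M = (y:ℕ) := by
        have := nat_div_shift (z:ℕ) (y:ℕ) M 0 z.isLt
        simpa using this
      rw [ZMod.val_natCast, Nat.mod_eq_of_lt (hlt' (z,y)), e1, e2]

end Wsec

lemma singleCycle_facts {α : Type*} [Fintype α] [DecidableEq α] (g : α → α)
    (hg : ∀ a b : α, ∃ k : ℕ, g^[k] a = b) (a0 : α) :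
    (∀ i j : ℕ, i < Fintype.card α → j < Fintype.card α → g^[i] a0 = g^[j] a0 → i = j) ∧
      g^[Fintype.card α] a0 = a0 := by
  have hsurj : Function.Surjective g := by
    intro b
    obtain ⟨k, hk⟩ := hg (g b) b
    cases k with
    | zero => exact ⟨b, hk⟩
    | succ m =>
      refine ⟨g^[m] (g b), ?_⟩
      rw [← Function.iterate_succ_apply' g m (g b)]
      exact hk
  have hinj : Function.Injective g := Finite.injective_iff_surjective.mpr hsurj
  have hcancel : ∀ i j : ℕ, i ≤ j → g^[i] a0 = g^[j] a0 → g^[j-i] a0 = a0 := by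
    intro i j hij h
    have h2 : g^[i] (g^[j-i] a0) = g^[i] a0 := by
      rw [← Function.iterate_add_apply, show i + (j-i) = j by omega]
      exact h.symm
    exact Function.Injective.iterate hinj i h2
  have hper : ∀ e : ℕ, 0 < e → g^[e] a0 = a0 → Fintype.card α ≤ e := by
    intro e he hee
    have hqe : ∀ q, g^[e*q] a0 = a0 := by
      intro q
      induction q with
      | zero => simp
      | succ m ih =>
        rw [Nat.mul_succ, Function.iterate_add_apply, hee, ih]
    have hmod : ∀ j : ℕ, g^[j] a0 = g^[j % e] a0 := by
      intro j
      conv_lhs => rw [show j = j % e + e * (j / e) from (Nat.mod_add_div j e).symm]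
      rw [Function.iterate_add_apply, hqe]
    have hsurj2 : Function.Surjective (fun r : Fin e => g^[(r:ℕ)] a0) := by
      intro b
      obtain ⟨j, hj⟩ := hg a0 b
      exact ⟨⟨j % e, Nat.mod_lt _ he⟩, by simp only; rw [← hmod]; exact hj⟩
    have := Fintype.card_le_of_surjective _ hsurj2
    simpa using this
  have hex : ∃ e, 0 < e ∧ e ≤ Fintype.card α ∧ g^[e] a0 = a0 := by
    have hcard : Fintype.card α < Fintype.card (Fin (Fintype.card α + 1)) := by simp
    obtain ⟨i, j, hne, hij⟩ := Fintype.exists_ne_map_eq_of_card_lt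
      (fun r : Fin (Fintype.card α + 1) => g^[(r:ℕ)] a0) hcard
    rcases Nat.lt_or_ge (i:ℕ) (j:ℕ) with h | h
    · exact ⟨(j:ℕ) - (i:ℕ), by omega, by have := j.isLt; omega, hcancel _ _ (by omega) hij⟩
    · have hij' : (j:ℕ) ≠ (i:ℕ) := fun hc => hne (Fin.ext hc.symm)
      exact ⟨(i:ℕ) - (j:ℕ), by omega, by have := i.isLt; omega,
        hcancel _ _ (by omega) hij.symm⟩
  obtain ⟨e, he0, heN, hee⟩ := hex
  have heq : e = Fintype.card α := le_antisymm heN (hper e he0 hee)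
  constructor
  · intro i j hi hj hij
    by_contra hne
    rcases Nat.lt_or_ge i j with h | h
    · have := hper (j - i) (by omega) (hcancel i j (by omega) hij)
      omega
    · have := hper (i - j) (by omega) (hcancel j i (by omega) hij.symm)
      omega
  · rw [← heq]; exact hee

/-- wreath-product lifting: if `T` is a single-cycle permutation
of `Z/2^M`, the family `H_z` satisfies `δ_i(H_z x) = δ_i(x) + ρ_i(z;x)` with
`ρ_i(z;·)` depending only on bits `< i` of `x`, `∑_z ρ_0(z) ≡ 1 (mod 2)`, and
`∑_z ∑_{x<2^i} ρ_i(z;x) ≡ 1 (mod 2)` for `i ≥ 1`, then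
`W(x) = T(x mod 2^M) + 2^M·H_{x mod 2^M}(⌊x/2^M⌋)` is transitive modulo `2^k`
for every `k ≥ M`. -/
theorem wreath_product_lifting (M : ℕ) (hM : 1 ≤ M)
    (T : ZMod (2^M) → ZMod (2^M)) (hTb : Function.Bijective T) (hT : IsSingleCycle T)
    (H : ZMod (2^M) → ℤ_[2] → ℤ_[2])
    (ρ : ℕ → ZMod (2^M) → ℤ_[2] → ZMod 2)
    (h1 : ∀ (i : ℕ) (z : ZMod (2^M)) (x : ℤ_[2]),
      bit2 i (H z x) = bit2 i x + ρ i z x)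
    (h1' : ∀ (i : ℕ) (z : ZMod (2^M)) (x y : ℤ_[2]),
      (∀ s : ℕ, s < i → bit2 s x = bit2 s y) → ρ i z x = ρ i z y)
    (h2 : ∑ z : Fin (2^M), ρ 0 (((z : ℕ) : ZMod (2^M))) 0 = 1)
    (h3 : ∀ i : ℕ, 1 ≤ i →
      ∑ z : Fin (2^M), ∑ x : Fin (2^i),
        ρ i (((z : ℕ) : ZMod (2^M))) (((x : ℕ) : ℤ_[2])) = 1)
    (W : ℤ_[2] → ℤ_[2])
    (hW : ∀ (z : ZMod (2^M)) (y : ℤ_[2]),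
      W ((z.val : ℤ_[2]) + 2^M * y) = ((T z).val : ℤ_[2]) + 2^M * H z y) :
    ∀ k : ℕ, M ≤ k → IsSingleCycle (inducedMap k W) := by

  intro k
  induction k with
  | zero => intro hk; exact absurd hk (by omega)
  | succ n ih =>
    intro hk
    haveI := neZero_pow2 M
    haveI hne1 := neZero_pow2 n
    haveI hne2 := neZero_pow2 (n+1)
    rcases Nat.lt_or_ge n M with hnM | hnM
    · -- base case: n + 1 = M
      have hMe : n + 1 = M := by omega
      subst hMe
      have hbase : inducedMap (n+1) W = T := by
        funext a
        show padMod (n+1) (W ((a.val : ℕ) : ℤ_[2])) = T a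
        rw [W_eq hW a.val,
          show ((a.val : ℕ) : ZMod (2^(n+1))) = a from ZMod.natCast_rightInverse a]
        show ((((((T a).val : ℕ):ℤ_[2]) + 2^(n+1) * H a ((a.val / 2^(n+1) : ℕ) : ℤ_[2])).appr (n+1) : ℕ) : ZMod (2^(n+1))) = T a
        have hsimp : (T a).val + 2^(n+1) * (H a ((a.val / 2^(n+1) : ℕ) : ℤ_[2])).appr ((n+1) - (n+1)) = (T a).val := by
          rw [Nat.sub_self, appr_zero', Nat.mul_zero, Nat.add_zero]
        rw [appr_shift (n+1) (n+1) _ le_rfl (ZMod.val_lt _), hsimp]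
        exact ZMod.natCast_rightInverse (T a)
      rw [hbase]; exact hT
    · -- inductive step
      have hg : IsSingleCycle (inducedMap n W) := ih hnM
      set g := inducedMap n W with hgdef
      set f := inducedMap (n+1) W with hfdef
      have hp : 0 < 2^n := Nat.pow_pos (n := n) (by norm_num)
      have epow : 2^(n+1) = 2^n + 2^n := by ring
      set π : ZMod (2^(n+1)) → ZMod (2^n) := fun x => ((x.val : ℕ) : ZMod (2^n)) with hπdef
      have hfval : ∀ x : ZMod (2^(n+1)), f x = padMod (n+1) (W ((x.val:ℕ):ℤ_[2])) :=
        fun _ => rfl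
      have hval_pad : ∀ y : ℤ_[2], (padMod (n+1) y).val = y.appr (n+1) := by
        intro y
        show ((y.appr (n+1) : ℕ) : ZMod (2^(n+1))).val = y.appr (n+1)
        rw [ZMod.val_natCast, Nat.mod_eq_of_lt (y.appr_lt (n+1))]
      have hπpad : ∀ y : ℤ_[2], π (padMod (n+1) y) = padMod n y := by
        intro y
        show (((padMod (n+1) y).val : ℕ) : ZMod (2^n)) = ((y.appr n : ℕ) : ZMod (2^n))
        rw [hval_pad, ← appr_mod y (Nat.le_succ n), ZMod.natCast_mod]
      have hπval : ∀ x : ZMod (2^(n+1)), (π x).val = x.val % 2^n := by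
        intro x
        show ((x.val : ℕ) : ZMod (2^n)).val = _
        exact ZMod.val_natCast _ x.val
      have hcomm : ∀ x : ZMod (2^(n+1)), π (f x) = g (π x) := by
        intro x
        rw [hfval, hπpad]
        show padMod n (W ((x.val:ℕ):ℤ_[2])) = padMod n (W (((π x).val : ℕ) : ℤ_[2]))
        rw [hπval]
        exact padW_congr h1 h1' hW n hnM _ _ (Nat.mod_mod_of_dvd _ dvd_rfl).symm
      have hfnat : ∀ w : ℕ, f ((w : ZMod (2^(n+1)))) = padMod (n+1) (W ((w:ℕ):ℤ_[2])) := by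
        intro w
        rw [hfval, ZMod.val_natCast]
        exact padW_congr h1 h1' hW (n+1) (by omega) _ _ (Nat.mod_mod_of_dvd _ dvd_rfl)
      set c : ZMod (2^(n+1)) := ((2^n : ℕ) : ZMod (2^(n+1))) with hcdef
      have hxplus : ∀ x : ZMod (2^(n+1)), x + c = (((x.val + 2^n : ℕ)) : ZMod (2^(n+1))) := by
        intro x
        rw [Nat.cast_add]
        congr 1
        exact (ZMod.natCast_rightInverse x).symm
      have hflip : ∀ x, f (x + c) = f x + c := by
        intro x
        rw [hxplus, hfnat, padW_flip h1 h1' hW n hnM x.val, ← hfval x]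
      set tb : ZMod (2^(n+1)) → ZMod 2 := fun x => ((x.val / 2^n : ℕ) : ZMod 2) with htbdef
      set β : ZMod (2^n) → ZMod 2 := fun a => bit2 n (W ((a.val:ℕ):ℤ_[2])) with hβdef
      have htf : ∀ x, tb (f x) = bit2 n (W ((x.val:ℕ):ℤ_[2])) := by
        intro x
        show (((f x).val / 2^n : ℕ) : ZMod 2) = _
        rw [hfval, hval_pad]
        rfl
      have hstep : ∀ x, tb (f x) = tb x + β (π x) := by
        intro x
        have hβπ : β (π x) = bit2 n (W ((x.val % 2^n : ℕ):ℤ_[2])) := by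
          show bit2 n (W (((π x).val : ℕ):ℤ_[2])) = _
          rw [hπval]
        rw [htf, hβπ]
        rcases Nat.lt_or_ge x.val (2^n) with hv | hv
        · rw [Nat.mod_eq_of_lt hv]
          have h0 : tb x = 0 := by
            show ((x.val / 2^n : ℕ) : ZMod 2) = 0
            rw [Nat.div_eq_of_lt hv, Nat.cast_zero]
          rw [h0, zero_add]
        · have hv2 : x.val < 2^(n+1) := ZMod.val_lt x
          have hdiv1 : x.val / 2^n = 1 := Nat.div_eq_of_lt_le (by omega) (by omega)
          have hmd := Nat.mod_add_div x.val (2^n)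
          rw [hdiv1, Nat.mul_one] at hmd
          have hv3 : x.val % 2^n + 2^n = x.val := hmd
          have h1t : tb x = 1 := by
            show ((x.val / 2^n : ℕ) : ZMod 2) = 1
            rw [hdiv1, Nat.cast_one]
          conv_lhs => rw [← hv3]
          rw [W_bit_flip_top h1 h1' hW n hnM (x.val % 2^n), h1t]
          ring
      have horb : ∀ m : ℕ, π (f^[m] 0) = g^[m] 0 ∧
          tb (f^[m] 0) = ∑ j ∈ Finset.range m, β (g^[j] 0) := by
        intro m
        induction m with
        | zero =>
          constructor
          · show ((((0:ZMod (2^(n+1))).val : ℕ)) : ZMod (2^n)) = 0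
            rw [ZMod.val_zero, Nat.cast_zero]
          · show (((0:ZMod (2^(n+1))).val / 2^n : ℕ) : ZMod 2) = 0
            simp
        | succ m ihm =>
          obtain ⟨ih1, ih2⟩ := ihm
          rw [Function.iterate_succ_apply']
          constructor
          · rw [hcomm, ih1, ← Function.iterate_succ_apply' g m 0]
          · rw [hstep, ih2, ih1, Finset.sum_range_succ]
      have hcardn : Fintype.card (ZMod (2^n)) = 2^n := ZMod.card _
      obtain ⟨ginj, gper⟩ := singleCycle_facts g hg 0
      rw [hcardn] at ginj gper
      have hS : ∑ a : ZMod (2^n), β a = 1 := by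
        rw [hβdef]
        exact sum_beta h1 hW n hnM h2 h3
      have hsum2 : ∑ j ∈ Finset.range (2^n), β (g^[j] 0) = 1 := by
        rw [← Fin.sum_univ_eq_sum_range (fun j => β (g^[j] 0)) (2^n)]
        rw [Fintype.sum_bijective (fun j : Fin (2^n) => g^[(j:ℕ)] 0) ?_
          (fun j : Fin (2^n) => β (g^[(j:ℕ)] 0)) β (fun j => rfl)]
        · exact hS
        · rw [Fintype.bijective_iff_injective_and_card]
          constructor
          · intro i j hij
            exact Fin.ext (ginj _ _ i.isLt j.isLt hij)
          · rw [hcardn, Fintype.card_fin]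
      have hmid : f^[2^n] 0 = c := by
        obtain ⟨hπm, htm⟩ := horb (2^n)
        rw [gper] at hπm
        rw [hsum2] at htm
        set x := f^[2^n] 0 with hxdef
        have hdvd : 2^n ∣ x.val := by
          have hz : ((x.val : ℕ) : ZMod (2^n)) = 0 := hπm
          exact (ZMod.natCast_eq_zero_iff _ _).1 hz
        have hlt2 : x.val < 2^(n+1) := ZMod.val_lt x
        have hdiv : x.val / 2^n = 1 := by
          have h2' : x.val < 2^n * 2 := by
            rw [show 2^n * 2 = 2^(n+1) from by ring]
            exact hlt2
          have hle : x.val / 2^n ≤ 1 := Nat.le_of_lt_succ (Nat.div_lt_of_lt_mul h2')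
          rcases Nat.lt_or_ge (x.val / 2^n) 1 with hcase | hcase
          · exfalso
            have h0 : x.val / 2^n = 0 := Nat.lt_one_iff.1 hcase
            have htm0 : tb x = 0 := by
              show ((x.val / 2^n : ℕ) : ZMod 2) = 0
              rw [h0, Nat.cast_zero]
            exact absurd (htm0.symm.trans htm) (by decide)
          · exact le_antisymm hle hcase
        obtain ⟨q, hq⟩ := hdvd
        have hq1 : q = 1 := by
          rw [hq, Nat.mul_div_cancel_left q hp] at hdiv
          exact hdiv
        have hxval : x.val = 2^n := by rw [hq, hq1, Nat.mul_one]
        calc x = ((x.val : ℕ) : ZMod (2^(n+1))) := (ZMod.natCast_rightInverse x).symm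
          _ = c := by rw [hxval]
      have hflip_iter : ∀ m (x : ZMod (2^(n+1))), f^[m] (x + c) = f^[m] x + c := by
        intro m
        induction m with
        | zero => intro x; simp
        | succ m ihm =>
          intro x
          rw [Function.iterate_succ_apply, Function.iterate_succ_apply, hflip, ihm]
      have hsecond : ∀ j, f^[j + 2^n] 0 = f^[j] 0 + c := by
        intro j
        have hfl := hflip_iter j 0
        simp only [zero_add] at hfl
        rw [Function.iterate_add_apply, hmid, hfl]
      have hfull : f^[2^(n+1)] 0 = 0 := by
        have hcc : c + c = 0 := by
          rw [hcdef, ← Nat.cast_add, show 2^n + 2^n = 2^(n+1) from by ring, ZMod.natCast_self]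
        have hexp := congrArg (fun m : ℕ => f^[m] (0 : ZMod (2^(n+1)))) epow
        rw [hexp, hsecond (2^n), hmid, hcc]
      have hcne : c ≠ 0 := by
        rw [hcdef]
        intro hcon
        have hdvd := (ZMod.natCast_eq_zero_iff _ _).1 hcon
        have := Nat.le_of_dvd hp hdvd
        omega
      have hmodg : ∀ j, g^[j] 0 = g^[j % 2^n] 0 := by
        intro j
        have hqe : ∀ q, g^[2^n * q] 0 = 0 := by
          intro q
          induction q with
          | zero => simp
          | succ m ihm => rw [Nat.mul_succ, Function.iterate_add_apply, gper, ihm]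
        conv_lhs => rw [show j = j % 2^n + 2^n * (j / 2^n) from (Nat.mod_add_div j (2^n)).symm]
        rw [Function.iterate_add_apply, hqe]
      have horbinj : ∀ i j : ℕ, i < 2^(n+1) → j < 2^(n+1) → f^[i] 0 = f^[j] 0 → i = j := by
        intro i j hi hj hij
        have hπij : g^[i] 0 = g^[j] 0 := by
          rw [← (horb i).1, ← (horb j).1, hij]
        have hmodij : i % 2^n = j % 2^n := by
          apply ginj _ _ (Nat.mod_lt _ hp) (Nat.mod_lt _ hp)
          rw [← hmodg, ← hmodg]
          exact hπij
        have hemul : 2^n * 2 = 2^(n+1) := by ring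
        have hi2 : i / 2^n ≤ 1 :=
          Nat.le_of_lt_succ (Nat.div_lt_of_lt_mul (hemul ▸ hi))
        have hj2 : j / 2^n ≤ 1 :=
          Nat.le_of_lt_succ (Nat.div_lt_of_lt_mul (hemul ▸ hj))
        have hi01 : i / 2^n = 0 ∨ i / 2^n = 1 := by
          rcases Nat.lt_or_ge (i / 2^n) 1 with h | h
          · exact Or.inl (Nat.lt_one_iff.1 h)
          · exact Or.inr (le_antisymm hi2 h)
        have hj01 : j / 2^n = 0 ∨ j / 2^n = 1 := by
          rcases Nat.lt_or_ge (j / 2^n) 1 with h | h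
          · exact Or.inl (Nat.lt_one_iff.1 h)
          · exact Or.inr (le_antisymm hj2 h)
        have hieq := Nat.mod_add_div i (2^n)
        have hjeq := Nat.mod_add_div j (2^n)
        rcases hi01 with hi0 | hi0 <;> rcases hj01 with hj0 | hj0
        · rw [hi0, Nat.mul_zero, Nat.add_zero] at hieq
          rw [hj0, Nat.mul_zero, Nat.add_zero] at hjeq
          omega
        · exfalso
          rw [hi0, Nat.mul_zero, Nat.add_zero] at hieq
          rw [hj0, Nat.mul_one] at hjeq
          have e1 : f^[i] 0 = f^[i % 2^n] 0 := by rw [hieq]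
          have e2 : f^[j] 0 = f^[j % 2^n] 0 + c := by
            rw [← hsecond (j % 2^n), hjeq]
          rw [e1, e2, hmodij] at hij
          exact hcne ((left_eq_add).1 hij)
        · exfalso
          rw [hj0, Nat.mul_zero, Nat.add_zero] at hjeq
          rw [hi0, Nat.mul_one] at hieq
          have e1 : f^[j] 0 = f^[j % 2^n] 0 := by rw [hjeq]
          have e2 : f^[i] 0 = f^[i % 2^n] 0 + c := by
            rw [← hsecond (i % 2^n), hieq]
          rw [e1, e2, hmodij] at hij
          exact hcne ((left_eq_add).1 hij.symm)
        · rw [hi0, Nat.mul_one] at hieq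
          rw [hj0, Nat.mul_one] at hjeq
          omega
      have hbij : Function.Bijective (fun i : Fin (2^(n+1)) => f^[(i:ℕ)] 0) := by
        rw [Fintype.bijective_iff_injective_and_card]
        constructor
        · intro i j hij
          exact Fin.ext (horbinj _ _ i.isLt j.isLt hij)
        · rw [Fintype.card_fin, ZMod.card]
      intro a b
      obtain ⟨i, hi⟩ := hbij.2 a
      obtain ⟨j, hj⟩ := hbij.2 b
      refine ⟨(j:ℕ) + 2^(n+1) - (i:ℕ), ?_⟩
      have hile : (i:ℕ) ≤ 2^(n+1) := le_of_lt i.isLt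
      have key : f^[(j:ℕ) + 2^(n+1) - (i:ℕ)] a = f^[(j:ℕ) + 2^(n+1)] 0 := by
        rw [← hi, ← Function.iterate_add_apply,
          show (j:ℕ) + 2^(n+1) - (i:ℕ) + (i:ℕ) = (j:ℕ) + 2^(n+1) by omega]
      rw [key, Function.iterate_add_apply, hfull]
      exact hj
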